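/- If a, b, c are pairwise distinct nonzero rational numbers with ab² + bc² + ca² = 3abc, then there exist unique r ∈ ℚ* and t ∈ ℚ \ {-1, 0} with (a, b, c) = (rt², -r(t+1), rt(t+1)²). -/

import Mathlib

theorem stmt_17 (a b c : ℚ) (ha : a ≠ 0) (hb : b ≠ 0) (hc : c ≠ 0)
    (hab : a ≠ b) (hbc : b ≠ c) (hac : a ≠ c)
    (heq : a * b ^ 2 + b * c ^ 2 + c * a ^ 2 = 3 * (a * b * c)) :
    ∃! rt : ℚ × ℚ, rt.1 ≠ 0 ∧ rt.2 ≠ -1 ∧ rt.2 ≠ 0 ∧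
      a = rt.1 * rt.2 ^ 2 ∧ b = -rt.1 * (rt.2 + 1) ∧
      c = rt.1 * rt.2 * (rt.2 + 1) ^ 2 := by
  have hab' : a - b ≠ 0 := sub_ne_zero.mpr hab
  have hca' : c - a ≠ 0 := sub_ne_zero.mpr (Ne.symm hac)
  refine ⟨(a * (a - b) ^ 2 / (c - a) ^ 2, (c - a) / (a - b)),
    ⟨div_ne_zero (mul_ne_zero ha (pow_ne_zero _ hab')) (pow_ne_zero _ hca'),
     ?_, div_ne_zero hca' hab', ?_, ?_, ?_⟩, ?_⟩
  · intro h
    rw [div_eq_iff hab'] at h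
    exact hbc (by linarith)
  · field_simp
  · show b = -(a * (a - b) ^ 2 / (c - a) ^ 2) * ((c - a) / (a - b) + 1)
    field_simp
    linear_combination heq
  · show c = a * (a - b) ^ 2 / (c - a) ^ 2 * ((c - a) / (a - b)) * ((c - a) / (a - b) + 1) ^ 2
    field_simp
    linear_combination -heq
  · rintro ⟨r', t'⟩ ⟨hr', ht1', ht0', ha', hb', hc'⟩
    simp only at *
    have htt : t' = (c - a) / (a - b) := by
      rw [eq_div_iff hab', ha', hb', hc']; ring
    have hrr : r' = a * (a - b) ^ 2 / (c - a) ^ 2 := by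
      rw [htt] at ha'
      field_simp at ha' ⊢
      linarith
    simp [Prod.ext_iff, hrr, htt]
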